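/- For fixed λ ∈ ℂ, the series Σ_{n=0}^∞ (λ^n/n!) (f X^{(n)}, g Y^{(n)})^T and Σ_{n=0}^∞ (λ^n/n!) (f X̃^{(n)}, g Ỹ^{(n)})^T converge uniformly on [a,b]. -/

import Mathlib

open Set intervalIntegral MeasureTheory

lemma abs_integral_abs_pow (x0 x : ℝ) (n : ℕ) :
    |∫ s in x0..x, |s - x0| ^ n| = |x - x0| ^ (n + 1) / (n + 1) := by
  rcases le_total x0 x with h | h
  · have h1 : (∫ s in x0..x, |s - x0| ^ n) = ∫ s in x0..x, (s - x0) ^ n := by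
      apply intervalIntegral.integral_congr
      intro s hs
      rw [uIcc_of_le h] at hs
      simp only
      rw [abs_of_nonneg (by linarith [hs.1])]
    rw [h1, intervalIntegral.integral_comp_sub_right (fun u => u ^ n) x0, sub_self,
      integral_pow, zero_pow (Nat.succ_ne_zero n), sub_zero, abs_div, abs_pow,
      abs_of_nonneg (by positivity : (0:ℝ) ≤ (n:ℝ)+1)]
  · have h1 : (∫ s in x0..x, |s - x0| ^ n) = ∫ s in x0..x, (x0 - s) ^ n := by
      apply intervalIntegral.integral_congr
      intro s hs
      rw [uIcc_comm, uIcc_of_le h] at hs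
      simp only
      rw [abs_of_nonpos (by linarith [hs.2]), neg_sub]
    rw [h1, intervalIntegral.integral_comp_sub_left (fun u => u ^ n) x0, sub_self,
      integral_pow, zero_pow (Nat.succ_ne_zero n), zero_sub, abs_div, abs_neg, abs_pow,
      abs_of_nonneg (by positivity : (0:ℝ) ≤ (n:ℝ)+1), abs_sub_comm]

lemma norm_intervalIntegral_le_pow {a b x0 x : ℝ} (hab : a ≤ b) (hx0 : x0 ∈ Icc a b)
    (hx : x ∈ Icc a b) {h : ℝ → ℂ} (hc : ContinuousOn h (Icc a b)) {B : ℝ} (hB : 0 ≤ B) (n : ℕ)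
    (hb : ∀ s ∈ Icc a b, ‖h s‖ ≤ B * |s - x0| ^ n) :
    ‖∫ s in x0..x, h s‖ ≤ B * (|x - x0| ^ (n + 1) / (n + 1)) := by
  have hsub : uIcc x0 x ⊆ Icc a b := uIcc_subset_Icc hx0 hx
  have key : ‖∫ s in x0..x, h s‖ ≤ |∫ s in x0..x, B * |s - x0| ^ n| := by
    apply intervalIntegral.norm_integral_le_abs_of_norm_le
    · filter_upwards [ae_restrict_mem measurableSet_uIoc] with t ht
      exact hb t (hsub (uIoc_subset_uIcc ht))
    · exact (Continuous.intervalIntegrable (by continuity) x0 x)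
  calc ‖∫ s in x0..x, h s‖ ≤ |∫ s in x0..x, B * |s - x0| ^ n| := key
    _ = |B| * |∫ s in x0..x, |s - x0| ^ n| := by
        rw [intervalIntegral.integral_const_mul, abs_mul]
    _ = |B| * (|x - x0| ^ (n + 1) / (n + 1)) := by rw [abs_integral_abs_pow]
    _ ≤ B * (|x - x0| ^ (n + 1) / (n + 1)) := by
        rw [abs_of_nonneg hB]

lemma continuousOn_primitive_Icc' {a b x0 : ℝ} (hab : a ≤ b) (hx0 : x0 ∈ Icc a b)
    {h : ℝ → ℂ} (hc : ContinuousOn h (Icc a b)) :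
    ContinuousOn (fun x => ∫ s in x0..x, h s) (Icc a b) := by
  rw [← uIcc_of_le hab] at hx0 hc ⊢
  exact continuousOn_primitive_interval' (hc.intervalIntegrable) hx0


/-- The SPPS formal powers `(X⁽ⁿ⁾, Y⁽ⁿ⁾)` defined by the recursion
`X⁽ⁿ⁺¹⁾ = (n+1)∫ (-r₂₁ X⁽ⁿ⁾ - r₂₂ (g/f) Y⁽ⁿ⁾ + (p₂/f²) Z⁽ⁿ⁾)`,
`Y⁽ⁿ⁺¹⁾ = (n+1)∫ (r₁₁ (f/g) X⁽ⁿ⁾ + r₁₂ Y⁽ⁿ⁾ + (p₁/g²) Z⁽ⁿ⁾)`, where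
`Z⁽ⁿ⁾ = ∫ (X⁽ⁿ⁾(f²r₁₁+g²r₂₁) + Y⁽ⁿ⁾(f²r₁₂+g²r₂₂))`. -/
noncomputable def spps (p1 p2 r11 r12 r21 r22 f g : ℝ → ℂ) (x0 : ℝ) (X0 Y0 : ℝ → ℂ) :
    ℕ → (ℝ → ℂ) × (ℝ → ℂ)
  | 0 => (X0, Y0)
  | n + 1 =>
    let X := (spps p1 p2 r11 r12 r21 r22 f g x0 X0 Y0 n).1
    let Y := (spps p1 p2 r11 r12 r21 r22 f g x0 X0 Y0 n).2
    let Z : ℝ → ℂ := fun x => ∫ s in x0..x,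
      (X s * (f s ^ 2 * r11 s + g s ^ 2 * r21 s) + Y s * (f s ^ 2 * r12 s + g s ^ 2 * r22 s))
    (fun x => (n + 1 : ℂ) * ∫ s in x0..x,
        (-(r21 s) * X s - r22 s * (g s / f s) * Y s + p2 s / f s ^ 2 * Z s),
     fun x => (n + 1 : ℂ) * ∫ s in x0..x,
        (r11 s * (f s / g s) * X s + r12 s * Y s + p1 s / g s ^ 2 * Z s))

/-- The SPPS formal power `Z⁽ⁿ⁾`. -/
noncomputable def sppsZ (p1 p2 r11 r12 r21 r22 f g : ℝ → ℂ) (x0 : ℝ) (X0 Y0 : ℝ → ℂ)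
    (n : ℕ) : ℝ → ℂ := fun x => ∫ s in x0..x,
      ((spps p1 p2 r11 r12 r21 r22 f g x0 X0 Y0 n).1 s * (f s ^ 2 * r11 s + g s ^ 2 * r21 s)
        + (spps p1 p2 r11 r12 r21 r22 f g x0 X0 Y0 n).2 s * (f s ^ 2 * r12 s + g s ^ 2 * r22 s))

/-- Initial formal power `X⁽⁰⁾(x) = f(x₀)g(x₀) ∫_{x₀}^x p₂/f²`. -/
noncomputable def sppsX0 (p2 f g : ℝ → ℂ) (x0 : ℝ) : ℝ → ℂ :=
  fun x => f x0 * g x0 * ∫ s in x0..x, p2 s / f s ^ 2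

/-- Initial formal power `Y⁽⁰⁾(x) = 1 + f(x₀)g(x₀) ∫_{x₀}^x p₁/g²`. -/
noncomputable def sppsY0 (p1 f g : ℝ → ℂ) (x0 : ℝ) : ℝ → ℂ :=
  fun x => 1 + f x0 * g x0 * ∫ s in x0..x, p1 s / g s ^ 2

/-- Initial formal power `X̃⁽⁰⁾(x) = 1 - f(x₀)g(x₀) ∫_{x₀}^x p₂/f²`. -/
noncomputable def sppsXt0 (p2 f g : ℝ → ℂ) (x0 : ℝ) : ℝ → ℂ :=
  fun x => 1 - f x0 * g x0 * ∫ s in x0..x, p2 s / f s ^ 2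

/-- Initial formal power `Ỹ⁽⁰⁾(x) = -f(x₀)g(x₀) ∫_{x₀}^x p₁/g²`. -/
noncomputable def sppsYt0 (p1 f g : ℝ → ℂ) (x0 : ℝ) : ℝ → ℂ :=
  fun x => -(f x0 * g x0) * ∫ s in x0..x, p1 s / g s ^ 2

/-- The max-norm (sup norm) of a function on `[a,b]`. -/
noncomputable def supNorm (a b : ℝ) (h : ℝ → ℂ) : ℝ :=
  sSup ((fun x => ‖h x‖) '' Icc a b)


lemma spps_succ_fst (p1 p2 r11 r12 r21 r22 f g : ℝ → ℂ) (x0 : ℝ) (X0 Y0 : ℝ → ℂ) (n : ℕ) :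
    (spps p1 p2 r11 r12 r21 r22 f g x0 X0 Y0 (n+1)).1 =
    fun x => ((n : ℂ) + 1) * ∫ s in x0..x,
        (-(r21 s) * (spps p1 p2 r11 r12 r21 r22 f g x0 X0 Y0 n).1 s
          - r22 s * (g s / f s) * (spps p1 p2 r11 r12 r21 r22 f g x0 X0 Y0 n).2 s
          + p2 s / f s ^ 2 * ∫ t in x0..s,
            ((spps p1 p2 r11 r12 r21 r22 f g x0 X0 Y0 n).1 t * (f t ^ 2 * r11 t + g t ^ 2 * r21 t)
             + (spps p1 p2 r11 r12 r21 r22 f g x0 X0 Y0 n).2 t * (f t ^ 2 * r12 t + g t ^ 2 * r22 t))) := rfl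

lemma spps_succ_snd (p1 p2 r11 r12 r21 r22 f g : ℝ → ℂ) (x0 : ℝ) (X0 Y0 : ℝ → ℂ) (n : ℕ) :
    (spps p1 p2 r11 r12 r21 r22 f g x0 X0 Y0 (n+1)).2 =
    fun x => ((n : ℂ) + 1) * ∫ s in x0..x,
        (r11 s * (f s / g s) * (spps p1 p2 r11 r12 r21 r22 f g x0 X0 Y0 n).1 s
          + r12 s * (spps p1 p2 r11 r12 r21 r22 f g x0 X0 Y0 n).2 s
          + p1 s / g s ^ 2 * ∫ t in x0..s,
            ((spps p1 p2 r11 r12 r21 r22 f g x0 X0 Y0 n).1 t * (f t ^ 2 * r11 t + g t ^ 2 * r21 t)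
             + (spps p1 p2 r11 r12 r21 r22 f g x0 X0 Y0 n).2 t * (f t ^ 2 * r12 t + g t ^ 2 * r22 t))) := rfl

set_option maxHeartbeats 1000000 in
lemma spps_growth (a b x0 : ℝ) (hab : a ≤ b) (hx0 : x0 ∈ Icc a b)
    (p1 p2 r11 r12 r21 r22 f g : ℝ → ℂ)
    (hp1 : ContinuousOn p1 (Icc a b)) (hp2 : ContinuousOn p2 (Icc a b))
    (hr11 : ContinuousOn r11 (Icc a b)) (hr12 : ContinuousOn r12 (Icc a b))
    (hr21 : ContinuousOn r21 (Icc a b)) (hr22 : ContinuousOn r22 (Icc a b))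
    (hf : ∀ x ∈ Icc a b, f x ≠ 0) (hg : ∀ x ∈ Icc a b, g x ≠ 0)
    (hfc : ContinuousOn f (Icc a b)) (hgc : ContinuousOn g (Icc a b))
    (X0 Y0 : ℝ → ℂ) (hX0 : ContinuousOn X0 (Icc a b)) (hY0 : ContinuousOn Y0 (Icc a b)) :
    ∃ A C : ℝ, 0 ≤ A ∧ 0 ≤ C ∧ ∀ n : ℕ,
      ContinuousOn (spps p1 p2 r11 r12 r21 r22 f g x0 X0 Y0 n).1 (Icc a b) ∧
      ContinuousOn (spps p1 p2 r11 r12 r21 r22 f g x0 X0 Y0 n).2 (Icc a b) ∧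
      ∀ x ∈ Icc a b,
        ‖(spps p1 p2 r11 r12 r21 r22 f g x0 X0 Y0 n).1 x‖ ≤ A * C ^ n * |x - x0| ^ n ∧
        ‖(spps p1 p2 r11 r12 r21 r22 f g x0 X0 Y0 n).2 x‖ ≤ A * C ^ n * |x - x0| ^ n := by
  set I := Icc a b with hI
  -- continuity of the coefficient combinations
  have hf2 : ∀ x ∈ I, f x ^ 2 ≠ 0 := fun x hx => pow_ne_zero _ (hf x hx)
  have hg2 : ∀ x ∈ I, g x ^ 2 ≠ 0 := fun x hx => pow_ne_zero _ (hg x hx)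
  have hc2 : ContinuousOn (fun s => r22 s * (g s / f s)) I := hr22.mul (hgc.div hfc hf)
  have hc3 : ContinuousOn (fun s => p2 s / f s ^ 2) I := hp2.div (hfc.pow 2) hf2
  have hc4 : ContinuousOn (fun s => r11 s * (f s / g s)) I := hr11.mul (hfc.div hgc hg)
  have hc6 : ContinuousOn (fun s => p1 s / g s ^ 2) I := hp1.div (hgc.pow 2) hg2
  have hw1 : ContinuousOn (fun s => f s ^ 2 * r11 s + g s ^ 2 * r21 s) I :=
    ((hfc.pow 2).mul hr11).add ((hgc.pow 2).mul hr21)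
  have hw2 : ContinuousOn (fun s => f s ^ 2 * r12 s + g s ^ 2 * r22 s) I :=
    ((hfc.pow 2).mul hr12).add ((hgc.pow 2).mul hr22)
  -- bounds
  obtain ⟨K1, hK1⟩ := isCompact_Icc.exists_bound_of_continuousOn hr21
  obtain ⟨K2, hK2⟩ := isCompact_Icc.exists_bound_of_continuousOn hc2
  obtain ⟨K3, hK3⟩ := isCompact_Icc.exists_bound_of_continuousOn hc3
  obtain ⟨K4, hK4⟩ := isCompact_Icc.exists_bound_of_continuousOn hc4
  obtain ⟨K5, hK5⟩ := isCompact_Icc.exists_bound_of_continuousOn hr12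
  obtain ⟨K6, hK6⟩ := isCompact_Icc.exists_bound_of_continuousOn hc6
  obtain ⟨K7, hK7⟩ := isCompact_Icc.exists_bound_of_continuousOn hw1
  obtain ⟨K8, hK8⟩ := isCompact_Icc.exists_bound_of_continuousOn hw2
  obtain ⟨A1, hA1⟩ := isCompact_Icc.exists_bound_of_continuousOn hX0
  obtain ⟨A2, hA2⟩ := isCompact_Icc.exists_bound_of_continuousOn hY0
  set K : ℝ := |K1| + |K2| + |K3| + |K4| + |K5| + |K6| + |K7| + |K8| with hKdef
  have hKnn : 0 ≤ K := by positivity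
  have hle : K1 ≤ K ∧ K2 ≤ K ∧ K3 ≤ K ∧ K4 ≤ K ∧ K5 ≤ K ∧ K6 ≤ K ∧ K7 ≤ K ∧ K8 ≤ K := by
    refine ⟨?_, ?_, ?_, ?_, ?_, ?_, ?_, ?_⟩ <;> rw [hKdef] <;>
      nlinarith [le_abs_self K1, le_abs_self K2, le_abs_self K3, le_abs_self K4,
          le_abs_self K5, le_abs_self K6, le_abs_self K7, le_abs_self K8,
          abs_nonneg K1, abs_nonneg K2, abs_nonneg K3, abs_nonneg K4,
          abs_nonneg K5, abs_nonneg K6, abs_nonneg K7, abs_nonneg K8]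
  have b1 : ∀ s ∈ I, ‖r21 s‖ ≤ K := fun s hs => (hK1 s hs).trans hle.1
  have b2 : ∀ s ∈ I, ‖r22 s * (g s / f s)‖ ≤ K := fun s hs => (hK2 s hs).trans hle.2.1
  have b3 : ∀ s ∈ I, ‖p2 s / f s ^ 2‖ ≤ K := fun s hs => (hK3 s hs).trans hle.2.2.1
  have b4 : ∀ s ∈ I, ‖r11 s * (f s / g s)‖ ≤ K := fun s hs => (hK4 s hs).trans hle.2.2.2.1
  have b5 : ∀ s ∈ I, ‖r12 s‖ ≤ K := fun s hs => (hK5 s hs).trans hle.2.2.2.2.1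
  have b6 : ∀ s ∈ I, ‖p1 s / g s ^ 2‖ ≤ K := fun s hs => (hK6 s hs).trans hle.2.2.2.2.2.1
  have b7 : ∀ s ∈ I, ‖f s ^ 2 * r11 s + g s ^ 2 * r21 s‖ ≤ K := fun s hs => (hK7 s hs).trans hle.2.2.2.2.2.2.1
  have b8 : ∀ s ∈ I, ‖f s ^ 2 * r12 s + g s ^ 2 * r22 s‖ ≤ K := fun s hs => (hK8 s hs).trans hle.2.2.2.2.2.2.2
  set L : ℝ := b - a with hLdef
  have hL : 0 ≤ L := by simp [hLdef]; linarith
  have habsle : ∀ s ∈ I, |s - x0| ≤ L := by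
    intro s hs
    rw [abs_sub_le_iff]
    constructor <;> [skip; skip] <;> simp only [hLdef] <;>
      · obtain ⟨h1, h2⟩ := hs; obtain ⟨h3, h4⟩ := hx0; linarith
  set A : ℝ := |A1| + |A2| with hAdef
  have hAnn : 0 ≤ A := by positivity
  have bA1 : ∀ s ∈ I, ‖X0 s‖ ≤ A := fun s hs => (hA1 s hs).trans
    (by nlinarith [le_abs_self A1, abs_nonneg A2])
  have bA2 : ∀ s ∈ I, ‖Y0 s‖ ≤ A := fun s hs => (hA2 s hs).trans
    (by nlinarith [le_abs_self A2, abs_nonneg A1])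
  set C : ℝ := 2*K + 2*K^2*L with hCdef
  have hCnn : 0 ≤ C := by positivity
  refine ⟨A, C, hAnn, hCnn, ?_⟩
  intro n
  induction n with
  | zero =>
    refine ⟨hX0, hY0, fun x hx => ?_⟩
    simp only [pow_zero, mul_one]
    exact ⟨bA1 x hx, bA2 x hx⟩
  | succ n ih =>
    obtain ⟨ihc1, ihc2, ihb⟩ := ih
    set Xn := (spps p1 p2 r11 r12 r21 r22 f g x0 X0 Y0 n).1 with hXn
    set Yn := (spps p1 p2 r11 r12 r21 r22 f g x0 X0 Y0 n).2 with hYn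
    set Zf : ℝ → ℂ := fun t => Xn t * (f t ^ 2 * r11 t + g t ^ 2 * r21 t)
        + Yn t * (f t ^ 2 * r12 t + g t ^ 2 * r22 t) with hZf
    have hZfc : ContinuousOn Zf I := (ihc1.mul hw1).add (ihc2.mul hw2)
    have hZc : ContinuousOn (fun x => ∫ t in x0..x, Zf t) I :=
      continuousOn_primitive_Icc' hab hx0 hZfc
    have hZfbound : ∀ s ∈ I, ‖Zf s‖ ≤ (2*K*(A*C^n)) * |s - x0| ^ n := by
      intro s hs
      obtain ⟨h1, h2⟩ := ihb s hs
      calc ‖Zf s‖ ≤ ‖Xn s‖ * ‖f s ^ 2 * r11 s + g s ^ 2 * r21 s‖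
            + ‖Yn s‖ * ‖f s ^ 2 * r12 s + g s ^ 2 * r22 s‖ := by
            refine (norm_add_le _ _).trans ?_
            rw [norm_mul, norm_mul]
        _ ≤ (A * C^n * |s - x0|^n) * K + (A * C^n * |s - x0|^n) * K := by
            gcongr <;> first | exact b7 s hs | exact b8 s hs | positivity
        _ = (2*K*(A*C^n)) * |s - x0| ^ n := by ring
    have hZbound : ∀ s ∈ I, ‖∫ t in x0..s, Zf t‖ ≤ 2*K*A*C^n*L * |s - x0| ^ n := by
      intro s hs
      have := norm_intervalIntegral_le_pow hab hx0 hs hZfc (by positivity) n hZfbound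
      refine this.trans ?_
      have hp1' : |s - x0| ^ (n+1) / (n+1) ≤ L * |s - x0| ^ n := by
        rw [div_le_iff₀ (by positivity), pow_succ]
        have h1 : |s - x0| ^ n * |s - x0| ≤ |s - x0| ^ n * L :=
          mul_le_mul_of_nonneg_left (habsle s hs) (by positivity)
        nlinarith [pow_nonneg (abs_nonneg (s - x0)) n,
          mul_nonneg hL (pow_nonneg (abs_nonneg (s - x0)) n)]
      calc 2*K*(A*C^n) * (|s - x0| ^ (n+1) / (n+1)) ≤ 2*K*(A*C^n) * (L * |s - x0|^n) := by
            apply mul_le_mul_of_nonneg_left hp1' (by positivity)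
        _ = 2*K*A*C^n*L * |s - x0| ^ n := by ring
    have hF1c : ContinuousOn (fun s => -(r21 s) * Xn s - r22 s * (g s / f s) * Yn s
        + p2 s / f s ^ 2 * ∫ t in x0..s, Zf t) I :=
      ((hr21.neg.mul ihc1).sub (hc2.mul ihc2)).add (hc3.mul hZc)
    have hF2c : ContinuousOn (fun s => r11 s * (f s / g s) * Xn s + r12 s * Yn s
        + p1 s / g s ^ 2 * ∫ t in x0..s, Zf t) I :=
      ((hc4.mul ihc1).add (hr12.mul ihc2)).add (hc6.mul hZc)
    have hF1bound : ∀ s ∈ I, ‖-(r21 s) * Xn s - r22 s * (g s / f s) * Yn s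
        + p2 s / f s ^ 2 * ∫ t in x0..s, Zf t‖ ≤ (A * C^(n+1)) * |s - x0| ^ n := by
      intro s hs
      obtain ⟨h1, h2⟩ := ihb s hs
      have hZb := hZbound s hs
      have e1 : ‖-(r21 s) * Xn s‖ ≤ K * (A * C^n * |s - x0|^n) := by
        rw [norm_mul, norm_neg]; exact mul_le_mul (b1 s hs) h1 (norm_nonneg _) hKnn
      have e2 : ‖r22 s * (g s / f s) * Yn s‖ ≤ K * (A * C^n * |s - x0|^n) := by
        rw [norm_mul]; exact mul_le_mul (b2 s hs) h2 (norm_nonneg _) hKnn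
      have e3 : ‖p2 s / f s ^ 2 * ∫ t in x0..s, Zf t‖ ≤ K * (2*K*A*C^n*L * |s - x0|^n) := by
        rw [norm_mul]; exact mul_le_mul (b3 s hs) hZb (norm_nonneg _) hKnn
      calc ‖-(r21 s) * Xn s - r22 s * (g s / f s) * Yn s
            + p2 s / f s ^ 2 * ∫ t in x0..s, Zf t‖
          ≤ ‖-(r21 s) * Xn s‖ + ‖r22 s * (g s / f s) * Yn s‖
            + ‖p2 s / f s ^ 2 * ∫ t in x0..s, Zf t‖ :=
            (norm_add_le _ _).trans (add_le_add (norm_sub_le _ _) le_rfl)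
        _ ≤ K * (A * C^n * |s - x0|^n) + K * (A * C^n * |s - x0|^n)
            + K * (2*K*A*C^n*L * |s - x0|^n) := add_le_add (add_le_add e1 e2) e3
        _ = (A * C^(n+1)) * |s - x0| ^ n := by rw [pow_succ, hCdef]; ring
    have hF2bound : ∀ s ∈ I, ‖r11 s * (f s / g s) * Xn s + r12 s * Yn s
        + p1 s / g s ^ 2 * ∫ t in x0..s, Zf t‖ ≤ (A * C^(n+1)) * |s - x0| ^ n := by
      intro s hs
      obtain ⟨h1, h2⟩ := ihb s hs
      have hZb := hZbound s hs
      have e1 : ‖r11 s * (f s / g s) * Xn s‖ ≤ K * (A * C^n * |s - x0|^n) := by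
        rw [norm_mul]; exact mul_le_mul (b4 s hs) h1 (norm_nonneg _) hKnn
      have e2 : ‖r12 s * Yn s‖ ≤ K * (A * C^n * |s - x0|^n) := by
        rw [norm_mul]; exact mul_le_mul (b5 s hs) h2 (norm_nonneg _) hKnn
      have e3 : ‖p1 s / g s ^ 2 * ∫ t in x0..s, Zf t‖ ≤ K * (2*K*A*C^n*L * |s - x0|^n) := by
        rw [norm_mul]; exact mul_le_mul (b6 s hs) hZb (norm_nonneg _) hKnn
      calc ‖r11 s * (f s / g s) * Xn s + r12 s * Yn s
            + p1 s / g s ^ 2 * ∫ t in x0..s, Zf t‖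
          ≤ ‖r11 s * (f s / g s) * Xn s‖ + ‖r12 s * Yn s‖
            + ‖p1 s / g s ^ 2 * ∫ t in x0..s, Zf t‖ :=
            (norm_add_le _ _).trans (add_le_add (norm_add_le _ _) le_rfl)
        _ ≤ K * (A * C^n * |s - x0|^n) + K * (A * C^n * |s - x0|^n)
            + K * (2*K*A*C^n*L * |s - x0|^n) := add_le_add (add_le_add e1 e2) e3
        _ = (A * C^(n+1)) * |s - x0| ^ n := by rw [pow_succ, hCdef]; ring
    have hnc : ‖((n : ℂ) + 1)‖ = (n : ℝ) + 1 := by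
      have h : ((n : ℂ) + 1) = ((n + 1 : ℕ) : ℂ) := by push_cast; ring
      rw [h, Complex.norm_natCast]; push_cast; ring
    refine ⟨?_, ?_, ?_⟩
    · rw [spps_succ_fst, ← hXn, ← hYn, ← hZf]
      exact continuousOn_const.mul (continuousOn_primitive_Icc' hab hx0 hF1c)
    · rw [spps_succ_snd, ← hXn, ← hYn, ← hZf]
      exact continuousOn_const.mul (continuousOn_primitive_Icc' hab hx0 hF2c)
    · intro x hx
      have hi1 := norm_intervalIntegral_le_pow hab hx0 hx hF1c (by positivity) n hF1bound
      have hi2 := norm_intervalIntegral_le_pow hab hx0 hx hF2c (by positivity) n hF2bound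
      constructor
      · rw [spps_succ_fst, ← hXn, ← hYn, ← hZf]
        simp only
        rw [norm_mul, hnc]
        calc ((n:ℝ)+1) * ‖∫ s in x0..x, (-(r21 s) * Xn s - r22 s * (g s / f s) * Yn s
              + p2 s / f s ^ 2 * ∫ t in x0..s, Zf t)‖
            ≤ ((n:ℝ)+1) * ((A * C^(n+1)) * (|x - x0| ^ (n+1) / (n+1))) :=
              mul_le_mul_of_nonneg_left hi1 (by positivity)
          _ = A * C^(n+1) * |x - x0| ^ (n+1) := by
              field_simp
      · rw [spps_succ_snd, ← hXn, ← hYn, ← hZf]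
        simp only
        rw [norm_mul, hnc]
        calc ((n:ℝ)+1) * ‖∫ s in x0..x, (r11 s * (f s / g s) * Xn s + r12 s * Yn s
              + p1 s / g s ^ 2 * ∫ t in x0..s, Zf t)‖
            ≤ ((n:ℝ)+1) * ((A * C^(n+1)) * (|x - x0| ^ (n+1) / (n+1))) :=
              mul_le_mul_of_nonneg_left hi2 (by positivity)
          _ = A * C^(n+1) * |x - x0| ^ (n+1) := by
              field_simp

lemma spps_series_aux {a b x0 : ℝ} (hab : a ≤ b) (hx0 : x0 ∈ Icc a b)
    (XY : ℕ → (ℝ → ℂ) × (ℝ → ℂ)) (f g : ℝ → ℂ) (M A C : ℝ)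
    (hM : 0 ≤ M) (hA : 0 ≤ A) (hC : 0 ≤ C)
    (hMf : ∀ x ∈ Icc a b, ‖f x‖ ≤ M) (hMg : ∀ x ∈ Icc a b, ‖g x‖ ≤ M)
    (hb : ∀ n : ℕ, ∀ x ∈ Icc a b, ‖(XY n).1 x‖ ≤ A * C ^ n * |x - x0| ^ n ∧
      ‖(XY n).2 x‖ ≤ A * C ^ n * |x - x0| ^ n) (lam : ℂ) :
    ∃ S1 : ℝ → ℂ × ℂ,
      TendstoUniformlyOn
        (fun N x => ∑ n ∈ Finset.range N,
          (lam ^ n / (n.factorial : ℂ)) • ((f x * (XY n).1 x, g x * (XY n).2 x) : ℂ × ℂ))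
        S1 Filter.atTop (Icc a b) := by
  set L : ℝ := b - a with hLdef
  have hL : 0 ≤ L := by rw [hLdef]; linarith
  have habsle : ∀ s ∈ Icc a b, |s - x0| ≤ L := by
    intro s hs
    rw [abs_sub_le_iff]
    constructor <;> rw [hLdef] <;>
      · obtain ⟨h1, h2⟩ := hs; obtain ⟨h3, h4⟩ := hx0; linarith
  refine ⟨fun x => ∑' n, (lam ^ n / (n.factorial : ℂ)) •
      ((f x * (XY n).1 x, g x * (XY n).2 x) : ℂ × ℂ), ?_⟩
  apply tendstoUniformlyOn_tsum_nat
    (u := fun n => (M * A) * (‖lam‖ * (C * L)) ^ n / n.factorial)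
  · simpa [mul_div_assoc] using
      (Real.summable_pow_div_factorial (‖lam‖ * (C * L))).mul_left (M * A)
  · intro n x hx
    have hXb := (hb n x hx).1
    have hYb := (hb n x hx).2
    have hpowle : |x - x0| ^ n ≤ L ^ n := pow_le_pow_left₀ (abs_nonneg _) (habsle x hx) n
    have hnorm1 : ‖f x * (XY n).1 x‖ ≤ M * (A * C ^ n * L ^ n) := by
      rw [norm_mul]
      refine mul_le_mul (hMf x hx) (hXb.trans ?_) (norm_nonneg _) hM
      gcongr
    have hnorm2 : ‖g x * (XY n).2 x‖ ≤ M * (A * C ^ n * L ^ n) := by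
      rw [norm_mul]
      refine mul_le_mul (hMg x hx) (hYb.trans ?_) (norm_nonneg _) hM
      gcongr
    have hpair : ‖((f x * (XY n).1 x, g x * (XY n).2 x) : ℂ × ℂ)‖
        ≤ M * (A * C ^ n * L ^ n) := by
      rw [Prod.norm_def]
      exact max_le hnorm1 hnorm2
    have hcoef : ‖lam ^ n / (n.factorial : ℂ)‖ = ‖lam‖ ^ n / (n.factorial : ℝ) := by
      rw [norm_div, norm_pow, Complex.norm_natCast]
    calc ‖(lam ^ n / (n.factorial : ℂ)) •
          ((f x * (XY n).1 x, g x * (XY n).2 x) : ℂ × ℂ)‖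
        = (‖lam‖ ^ n / (n.factorial : ℝ)) *
          ‖((f x * (XY n).1 x, g x * (XY n).2 x) : ℂ × ℂ)‖ := by rw [norm_smul, hcoef]
      _ ≤ (‖lam‖ ^ n / (n.factorial : ℝ)) * (M * (A * C ^ n * L ^ n)) := by
          apply mul_le_mul_of_nonneg_left hpair (by positivity)
      _ = (M * A) * (‖lam‖ * (C * L)) ^ n / n.factorial := by
          rw [mul_pow, mul_pow]; ring

/-- uniform convergence of the SPPS series on [a,b]. -/
theorem spps_series_uniform_convergence (a b x0 : ℝ) (hab : a ≤ b) (hx0 : x0 ∈ Icc a b)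
    (p1 p2 q r11 r12 r21 r22 f g : ℝ → ℂ)
    (hp1 : ContinuousOn p1 (Icc a b)) (hp2 : ContinuousOn p2 (Icc a b))
    (hq : ContinuousOn q (Icc a b))
    (hr11 : ContinuousOn r11 (Icc a b)) (hr12 : ContinuousOn r12 (Icc a b))
    (hr21 : ContinuousOn r21 (Icc a b)) (hr22 : ContinuousOn r22 (Icc a b))
    (hf : ∀ x ∈ Icc a b, f x ≠ 0) (hg : ∀ x ∈ Icc a b, g x ≠ 0)
    (hsys : ∀ x ∈ Icc a b,
      HasDerivWithinAt g (-(p1 x * f x) - q x * g x) (Icc a b) x ∧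
      HasDerivWithinAt f (q x * f x + p2 x * g x) (Icc a b) x)
    (S St : ℕ → (ℝ → ℂ) × (ℝ → ℂ))
    (hS : S = spps p1 p2 r11 r12 r21 r22 f g x0 (sppsX0 p2 f g x0) (sppsY0 p1 f g x0))
    (hSt : St = spps p1 p2 r11 r12 r21 r22 f g x0 (sppsXt0 p2 f g x0) (sppsYt0 p1 f g x0))
    (lam : ℂ) :
    ∃ S1 S2 : ℝ → ℂ × ℂ,
      TendstoUniformlyOn
        (fun N x => ∑ n ∈ Finset.range N,
          (lam ^ n / (n.factorial : ℂ)) • ((f x * (St n).1 x, g x * (St n).2 x) : ℂ × ℂ))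
        S1 Filter.atTop (Icc a b) ∧
      TendstoUniformlyOn
        (fun N x => ∑ n ∈ Finset.range N,
          (lam ^ n / (n.factorial : ℂ)) • ((f x * (S n).1 x, g x * (S n).2 x) : ℂ × ℂ))
        S2 Filter.atTop (Icc a b) := by
  subst hS
  subst hSt
  have hfc : ContinuousOn f (Icc a b) := fun x hx => ((hsys x hx).2.continuousWithinAt)
  have hgc : ContinuousOn g (Icc a b) := fun x hx => ((hsys x hx).1.continuousWithinAt)
  have hf2 : ∀ x ∈ Icc a b, f x ^ 2 ≠ 0 := fun x hx => pow_ne_zero _ (hf x hx)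
  have hg2 : ∀ x ∈ Icc a b, g x ^ 2 ≠ 0 := fun x hx => pow_ne_zero _ (hg x hx)
  have hprim2 : ContinuousOn (fun x => ∫ s in x0..x, p2 s / f s ^ 2) (Icc a b) :=
    continuousOn_primitive_Icc' hab hx0 (hp2.div (hfc.pow 2) hf2)
  have hprim1 : ContinuousOn (fun x => ∫ s in x0..x, p1 s / g s ^ 2) (Icc a b) :=
    continuousOn_primitive_Icc' hab hx0 (hp1.div (hgc.pow 2) hg2)
  have hX0c : ContinuousOn (sppsX0 p2 f g x0) (Icc a b) := continuousOn_const.mul hprim2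
  have hY0c : ContinuousOn (sppsY0 p1 f g x0) (Icc a b) :=
    continuousOn_const.add (continuousOn_const.mul hprim1)
  have hXt0c : ContinuousOn (sppsXt0 p2 f g x0) (Icc a b) :=
    continuousOn_const.sub (continuousOn_const.mul hprim2)
  have hYt0c : ContinuousOn (sppsYt0 p1 f g x0) (Icc a b) := continuousOn_const.mul hprim1
  obtain ⟨A, C, hA, hC, hbnd⟩ := spps_growth a b x0 hab hx0 p1 p2 r11 r12 r21 r22 f g
    hp1 hp2 hr11 hr12 hr21 hr22 hf hg hfc hgc _ _ hX0c hY0c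
  obtain ⟨At, Ct, hAt, hCt, hbndt⟩ := spps_growth a b x0 hab hx0 p1 p2 r11 r12 r21 r22 f g
    hp1 hp2 hr11 hr12 hr21 hr22 hf hg hfc hgc _ _ hXt0c hYt0c
  obtain ⟨M1, hM1⟩ := isCompact_Icc.exists_bound_of_continuousOn hfc
  obtain ⟨M2, hM2⟩ := isCompact_Icc.exists_bound_of_continuousOn hgc
  set M : ℝ := |M1| + |M2| with hMdef
  have hM : 0 ≤ M := by positivity
  have hMf : ∀ x ∈ Icc a b, ‖f x‖ ≤ M := fun x hx => (hM1 x hx).trans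
    (by rw [hMdef]; nlinarith [le_abs_self M1, abs_nonneg M2])
  have hMg : ∀ x ∈ Icc a b, ‖g x‖ ≤ M := fun x hx => (hM2 x hx).trans
    (by rw [hMdef]; nlinarith [le_abs_self M2, abs_nonneg M1])
  obtain ⟨S1, hS1⟩ := spps_series_aux hab hx0
    (spps p1 p2 r11 r12 r21 r22 f g x0 (sppsXt0 p2 f g x0) (sppsYt0 p1 f g x0)) f g
    M At Ct hM hAt hCt hMf hMg (fun n => (hbndt n).2.2) lam
  obtain ⟨S2, hS2⟩ := spps_series_aux hab hx0
    (spps p1 p2 r11 r12 r21 r22 f g x0 (sppsX0 p2 f g x0) (sppsY0 p1 f g x0)) f g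
    M A C hM hA hC hMf hMg (fun n => (hbnd n).2.2) lam
  exact ⟨S1, S2, hS1, hS2⟩
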